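/- arXiv:2301.06573 — 4 statements merged into one kernel-verified Lean document; each statement's English description precedes it below -/
import Mathlib

section
/- Let Λ be a sublattice of ℤⁿ. The following are equivalent: (1) the set Λ intersects every integer unit cube x + {0,1}ⁿ for x ∈ ℤⁿ; (2) every coset v + Λ intersects every integer unit cube; (3) every coset v + Λ contains a point of the unit cube {0,1}ⁿ. -/
/-- For a sublattice Λ of ℤⁿ, the following are equivalent:
(1) Λ intersects every integer unit cube x + {0,1}ⁿ;
(2) every coset v + Λ intersects every integer unit cube;
(3) every coset v + Λ contains a point of the unit cube {0,1}ⁿ. -/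
theorem stmt_0 (n : ℕ) (Λ : AddSubgroup (Fin n → ℤ)) :
    List.TFAE
      [ (∀ x : Fin n → ℤ, ∃ y ∈ Λ, ∀ i, y i = x i ∨ y i = x i + 1),
        (∀ v x : Fin n → ℤ, ∃ y : Fin n → ℤ, y - v ∈ Λ ∧ ∀ i, y i = x i ∨ y i = x i + 1),
        (∀ v : Fin n → ℤ, ∃ y : Fin n → ℤ, y - v ∈ Λ ∧ ∀ i, y i = 0 ∨ y i = 1) ] := by
  tfae_have 1 → 3 := by
    intro h1 v
    obtain ⟨y, hy, hyx⟩ := h1 (-v)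
    refine ⟨y + v, by simpa using hy, fun i => ?_⟩
    rcases hyx i with h | h <;> simp [Pi.add_apply, h] <;> omega
  tfae_have 3 → 2 := by
    intro h3 v x
    obtain ⟨y, hy, hy01⟩ := h3 (v - x)
    refine ⟨y + x, by simpa [sub_sub_eq_add_sub] using hy, fun i => ?_⟩
    rcases hy01 i with h | h <;> simp [Pi.add_apply, h] <;> omega
  tfae_have 2 → 1 := by
    intro h2 x
    obtain ⟨y, hy, hyx⟩ := h2 0 x
    exact ⟨y, by simpa using hy, hyx⟩
  tfae_finish
end

section
/- Let n ≥ 3 and let S = {v₁, …, vₙ} ⊂ ℤⁿ be a negative cyclic subset with associated integers aᵢ = ⟨vᵢ, vᵢ⟩ ≥ 2 (with respect to the standard positive-definite inner product), satisfying ⟨vᵢ, vᵢ₊₁⟩ = −1 for 1 ≤ i ≤ n−1, ⟨vₙ, v₁⟩ = 1, and ⟨vᵢ, vⱼ⟩ = 0 otherwise for i ≠ j. Suppose I(S) := Σᵢ (aᵢ − 3) > 0. Let W = Σᵢ vᵢ and z = (1/2)W. Then every vector x in the sublattice Λ generated by S satisfies ‖x − z‖² ≥ (n + I(S))/4 > n/4.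 -/
/-- The standard inner product on ℤⁿ. -/
def stdInnerZ {n : ℕ} (u w : Fin n → ℤ) : ℤ := ∑ t, u t * w t

/-- Let S = {v₁,…,vₙ} ⊂ ℤⁿ (n ≥ 3) be a negative cyclic subset with
⟨vᵢ,vᵢ⟩ = aᵢ ≥ 2, ⟨vᵢ,vᵢ₊₁⟩ = −1 (1 ≤ i ≤ n−1), ⟨vₙ,v₁⟩ = 1 and all other pairwise
inner products zero, and suppose I(S) = Σᵢ(aᵢ − 3) > 0. Let W = Σᵢ vᵢ and z = W/2.
Then every x in the sublattice generated by S satisfies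
‖x − z‖² ≥ (n + I(S))/4 > n/4. -/
theorem stmt_6 (n : ℕ) (hn : 3 ≤ n) (v : ℕ → Fin n → ℤ) (a : ℕ → ℤ)
    (ha : ∀ i < n, 2 ≤ a i)
    (hdiag : ∀ i < n, stdInnerZ (v i) (v i) = a i)
    (hadj : ∀ i, i + 1 < n → stdInnerZ (v i) (v (i + 1)) = -1)
    (hwrap : stdInnerZ (v (n - 1)) (v 0) = 1)
    (hzero : ∀ i j, i < n → j < n → i ≠ j → j ≠ i + 1 → i ≠ j + 1 →
      ¬(i = 0 ∧ j = n - 1) → ¬(j = 0 ∧ i = n - 1) → stdInnerZ (v i) (v j) = 0)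
    (hI : 0 < ∑ i ∈ Finset.range n, (a i - 3)) :
    (∀ c : ℕ → ℤ,
      ((n : ℝ) + (∑ i ∈ Finset.range n, (a i - 3) : ℤ)) / 4 ≤
        ∑ t : Fin n, (((∑ i ∈ Finset.range n, c i * v i t : ℤ) : ℝ) -
          ((∑ i ∈ Finset.range n, v i t : ℤ) : ℝ) / 2) ^ 2) ∧
      (n : ℝ) / 4 < ((n : ℝ) + (∑ i ∈ Finset.range n, (a i - 3) : ℤ)) / 4 := by
  have hsym : ∀ u w : Fin n → ℤ, stdInnerZ u w = stdInnerZ w u := fun u w =>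
    Finset.sum_congr rfl fun t _ => mul_comm _ _
  have hG : ∀ i, i < n → ∀ j, j < n →
      stdInnerZ (v i) (v j) = (if j = i then a i else 0) + (if j = i + 1 then -1 else 0) +
        (if i = j + 1 then -1 else 0) + (if i = 0 ∧ j = n - 1 then 1 else 0) +
        (if j = 0 ∧ i = n - 1 then 1 else 0) := by
    intro i hi j hj
    by_cases h1 : j = i
    · subst h1
      rw [hdiag j hj]
      simp [show ¬(j = j + 1) from by omega, show ¬(j = 0 ∧ j = n - 1) from by omega]
    by_cases h2 : j = i + 1
    · subst h2
      rw [hadj i hj]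
      simp [h1, show ¬(i = i + 1 + 1) from by omega,
        show ¬(i = 0 ∧ i + 1 = n - 1) from by omega, show ¬(i + 1 = 0) from by omega]
    by_cases h3 : i = j + 1
    · have hv : stdInnerZ (v i) (v j) = -1 := by
        rw [hsym]; subst h3; exact hadj j hi
      rw [hv]
      simp [h1, h2, h3, show ¬(i = 0) from by omega,
        show ¬(j = 0 ∧ i = n - 1) from by omega,
        show ¬(j = j + 1 + 1) from by omega,
        show ¬(j = 0 ∧ j + 1 = n - 1) from by omega]
    by_cases h4 : i = 0 ∧ j = n - 1
    · obtain ⟨hi0, hjn⟩ := h4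
      subst hi0; subst hjn
      rw [hsym, hwrap]
      simp [h1, h2, h3, show ¬(n - 1 = 0) from by omega]
    by_cases h5 : j = 0 ∧ i = n - 1
    · obtain ⟨hj0, hin⟩ := h5
      subst hj0; subst hin
      rw [hwrap]
      simp [h1, h2, h3, show ¬(n - 1 = 0) from by omega]
    · rw [hzero i j hi hj (fun h => h1 h.symm) h2 h3 h4 h5]
      simp [h1, h2, h3, h4, h5]
  refine ⟨?_, ?_⟩
  · intro c
    set d : ℕ → ℝ := fun i => (c i : ℝ) - 1 / 2 with hd
    have h1 : ∀ t : Fin n,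
        (((∑ i ∈ Finset.range n, c i * v i t : ℤ) : ℝ) -
          ((∑ i ∈ Finset.range n, v i t : ℤ) : ℝ) / 2) =
        ∑ i ∈ Finset.range n, d i * (v i t : ℝ) := by
      intro t
      push_cast
      rw [Finset.sum_div, ← Finset.sum_sub_distrib]
      exact Finset.sum_congr rfl fun i _ => by simp only [hd]; ring
    have h2 : ∑ t : Fin n, (∑ i ∈ Finset.range n, d i * (v i t : ℝ)) ^ 2 =
        ∑ i ∈ Finset.range n, ∑ j ∈ Finset.range n,
          d i * d j * ((stdInnerZ (v i) (v j) : ℤ) : ℝ) := by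
      have e : ∀ t : Fin n, (∑ i ∈ Finset.range n, d i * (v i t : ℝ)) ^ 2 =
          ∑ i ∈ Finset.range n, ∑ j ∈ Finset.range n,
            d i * (v i t : ℝ) * (d j * (v j t : ℝ)) := by
        intro t; rw [sq, Finset.sum_mul_sum]
      rw [Finset.sum_congr rfl fun t _ => e t, Finset.sum_comm]
      refine Finset.sum_congr rfl fun i _ => ?_
      rw [Finset.sum_comm]
      refine Finset.sum_congr rfl fun j _ => ?_
      simp only [stdInnerZ]
      push_cast
      rw [Finset.mul_sum]
      exact Finset.sum_congr rfl fun t _ => by ring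
    -- real version of Gram matrix
    have hGR : ∀ i ∈ Finset.range n, ∀ j ∈ Finset.range n,
        ((stdInnerZ (v i) (v j) : ℤ) : ℝ) =
        (if j = i then (a i : ℝ) else 0) + (if j = i + 1 then -1 else 0) +
        (if i = j + 1 then -1 else 0) + (if i = 0 ∧ j = n - 1 then 1 else 0) +
        (if j = 0 ∧ i = n - 1 then 1 else 0) := by
      intro i hi j hj
      rw [hG i (Finset.mem_range.mp hi) j (Finset.mem_range.mp hj)]
      push_cast [apply_ite (Int.cast : ℤ → ℝ)]
      ring
    have shift : ∀ f : ℕ → ℝ,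
        ∑ i ∈ Finset.range n, (if i + 1 < n then f i else 0) =
        ∑ i ∈ Finset.range (n - 1), f i := by
      intro f
      have hsub : Finset.range (n - 1) ⊆ Finset.range n :=
        Finset.range_subset_range.mpr (by omega)
      rw [← Finset.sum_subset hsub (fun x hx hx' => by
        rw [if_neg]; simp only [Finset.mem_range] at hx hx'; omega)]
      exact Finset.sum_congr rfl fun i hi =>
        if_pos (by simp only [Finset.mem_range] at hi; omega)
    have h3 : ∑ i ∈ Finset.range n, ∑ j ∈ Finset.range n,
          d i * d j * ((stdInnerZ (v i) (v j) : ℤ) : ℝ) =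
        (∑ i ∈ Finset.range n, (a i : ℝ) * d i ^ 2) -
          2 * (∑ i ∈ Finset.range (n - 1), d i * d (i + 1)) + 2 * (d 0 * d (n - 1)) := by
      have split : ∑ i ∈ Finset.range n, ∑ j ∈ Finset.range n,
            d i * d j * ((stdInnerZ (v i) (v j) : ℤ) : ℝ) =
          (∑ i ∈ Finset.range n, ∑ j ∈ Finset.range n,
            d i * d j * (if j = i then (a i : ℝ) else 0)) +
          (∑ i ∈ Finset.range n, ∑ j ∈ Finset.range n,
            d i * d j * (if j = i + 1 then (-1 : ℝ) else 0)) +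
          (∑ i ∈ Finset.range n, ∑ j ∈ Finset.range n,
            d i * d j * (if i = j + 1 then (-1 : ℝ) else 0)) +
          (∑ i ∈ Finset.range n, ∑ j ∈ Finset.range n,
            d i * d j * (if i = 0 ∧ j = n - 1 then (1 : ℝ) else 0)) +
          (∑ i ∈ Finset.range n, ∑ j ∈ Finset.range n,
            d i * d j * (if j = 0 ∧ i = n - 1 then (1 : ℝ) else 0)) := by
        simp only [← Finset.sum_add_distrib]
        refine Finset.sum_congr rfl fun i hi => Finset.sum_congr rfl fun j hj => ?_
        rw [hGR i hi j hj]; ring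
      rw [split]
      have T1 : ∑ i ∈ Finset.range n, ∑ j ∈ Finset.range n,
          d i * d j * (if j = i then (a i : ℝ) else 0) =
          ∑ i ∈ Finset.range n, (a i : ℝ) * d i ^ 2 := by
        refine Finset.sum_congr rfl fun i hi => ?_
        simp only [mul_ite, mul_zero]
        rw [Finset.sum_ite_eq' (Finset.range n) i (fun j => d i * d j * (a i : ℝ)),
          if_pos hi]
        ring
      have T2 : ∑ i ∈ Finset.range n, ∑ j ∈ Finset.range n,
          d i * d j * (if j = i + 1 then (-1 : ℝ) else 0) =
          -∑ i ∈ Finset.range (n - 1), d i * d (i + 1) := by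
        rw [← Finset.sum_neg_distrib, ← shift (fun i => -(d i * d (i + 1)))]
        refine Finset.sum_congr rfl fun i hi => ?_
        simp only [mul_ite, mul_zero]
        rw [Finset.sum_ite_eq' (Finset.range n) (i + 1) (fun j => d i * d j * (-1 : ℝ))]
        by_cases h : i + 1 < n
        · rw [if_pos (Finset.mem_range.mpr h), if_pos h]; ring
        · rw [if_neg (by simp only [Finset.mem_range]; omega), if_neg h]
      have T3 : ∑ i ∈ Finset.range n, ∑ j ∈ Finset.range n,
          d i * d j * (if i = j + 1 then (-1 : ℝ) else 0) =
          -∑ i ∈ Finset.range (n - 1), d i * d (i + 1) := by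
        rw [Finset.sum_comm, ← Finset.sum_neg_distrib,
          ← shift (fun j => -(d j * d (j + 1)))]
        refine Finset.sum_congr rfl fun j hj => ?_
        simp only [mul_ite, mul_zero]
        rw [Finset.sum_ite_eq' (Finset.range n) (j + 1) (fun i => d i * d j * (-1 : ℝ))]
        by_cases h : j + 1 < n
        · rw [if_pos (Finset.mem_range.mpr h), if_pos h]; ring
        · rw [if_neg (by simp only [Finset.mem_range]; omega), if_neg h]
      have T4 : ∑ i ∈ Finset.range n, ∑ j ∈ Finset.range n,
          d i * d j * (if i = 0 ∧ j = n - 1 then (1 : ℝ) else 0) =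
          d 0 * d (n - 1) := by
        rw [Finset.sum_eq_single_of_mem 0 (Finset.mem_range.mpr (by omega))
          (fun b _ hb => by
            refine Finset.sum_eq_zero fun j _ => ?_
            rw [if_neg (fun h => hb h.1), mul_zero])]
        rw [Finset.sum_eq_single_of_mem (n - 1) (Finset.mem_range.mpr (by omega))
          (fun b _ hb => by rw [if_neg (fun h => hb h.2), mul_zero])]
        rw [if_pos ⟨rfl, rfl⟩]; ring
      have T5 : ∑ i ∈ Finset.range n, ∑ j ∈ Finset.range n,
          d i * d j * (if j = 0 ∧ i = n - 1 then (1 : ℝ) else 0) =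
          d 0 * d (n - 1) := by
        rw [Finset.sum_eq_single_of_mem (n - 1) (Finset.mem_range.mpr (by omega))
          (fun b _ hb => by
            refine Finset.sum_eq_zero fun j _ => ?_
            rw [if_neg (fun h => hb h.2), mul_zero])]
        rw [Finset.sum_eq_single_of_mem 0 (Finset.mem_range.mpr (by omega))
          (fun b _ hb => by rw [if_neg (fun h => hb h.1), mul_zero])]
        rw [if_pos ⟨rfl, rfl⟩]; ring
      rw [T1, T2, T3, T4, T5]; ring
    -- pointwise lower bound on d i ^ 2
    have hq : ∀ i, (1 : ℝ) / 4 ≤ d i ^ 2 := by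
      intro i
      have h2c : (1 : ℤ) ≤ (2 * c i - 1) ^ 2 := by
        rcases le_or_gt (c i) 0 with h | h
        · nlinarith
        · nlinarith
      have hcr : (1 : ℝ) ≤ ((2 * c i - 1 : ℤ) : ℝ) ^ 2 := by exact_mod_cast h2c
      have hdi : d i = ((2 * c i - 1 : ℤ) : ℝ) / 2 := by
        simp only [hd]; push_cast; ring
      rw [hdi, div_pow]; linarith
    -- sum identities for SOS
    have shiftsq : ∑ i ∈ Finset.range n, d i ^ 2 =
        ∑ i ∈ Finset.range (n - 1), d (i + 1) ^ 2 + d 0 ^ 2 := by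
      conv_lhs => rw [show n = (n - 1) + 1 from by omega]
      rw [Finset.sum_range_succ']
    have lastsq : ∑ i ∈ Finset.range n, d i ^ 2 =
        ∑ i ∈ Finset.range (n - 1), d i ^ 2 + d (n - 1) ^ 2 := by
      conv_lhs => rw [show n = (n - 1) + 1 from by omega]
      rw [Finset.sum_range_succ]
    have sos : ∑ i ∈ Finset.range (n - 1), (d i - d (i + 1)) ^ 2 +
        (d 0 + d (n - 1)) ^ 2 =
        2 * ∑ i ∈ Finset.range n, d i ^ 2 -
          2 * ∑ i ∈ Finset.range (n - 1), d i * d (i + 1) + 2 * (d 0 * d (n - 1)) := by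
      have e1 : ∑ i ∈ Finset.range (n - 1), (d i - d (i + 1)) ^ 2 =
          ∑ i ∈ Finset.range (n - 1), d i ^ 2 +
          ∑ i ∈ Finset.range (n - 1), d (i + 1) ^ 2 -
          2 * ∑ i ∈ Finset.range (n - 1), d i * d (i + 1) := by
        rw [← Finset.sum_add_distrib, Finset.mul_sum, ← Finset.sum_sub_distrib]
        exact Finset.sum_congr rfl fun i _ => by ring
      rw [e1]
      linear_combination (-1 : ℝ) * shiftsq - lastsq
    have sos_nonneg : 0 ≤ ∑ i ∈ Finset.range (n - 1), (d i - d (i + 1)) ^ 2 +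
        (d 0 + d (n - 1)) ^ 2 := by
      have := Finset.sum_nonneg (fun i (_ : i ∈ Finset.range (n - 1)) =>
        sq_nonneg (d i - d (i + 1)))
      nlinarith [sq_nonneg (d 0 + d (n - 1))]
    have hmain : ∑ i ∈ Finset.range n, ((a i : ℝ) - 2) / 4 ≤
        ∑ i ∈ Finset.range n, ((a i : ℝ) - 2) * d i ^ 2 := by
      refine Finset.sum_le_sum fun i hi => ?_
      have h2 : (0 : ℝ) ≤ (a i : ℝ) - 2 := by
        have := ha i (Finset.mem_range.mp hi)
        have : (2 : ℝ) ≤ (a i : ℝ) := by exact_mod_cast this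
        linarith
      have := hq i
      nlinarith
    have hsplit : ∑ i ∈ Finset.range n, (a i : ℝ) * d i ^ 2 =
        ∑ i ∈ Finset.range n, ((a i : ℝ) - 2) * d i ^ 2 +
        2 * ∑ i ∈ Finset.range n, d i ^ 2 := by
      rw [Finset.mul_sum, ← Finset.sum_add_distrib]
      exact Finset.sum_congr rfl fun i _ => by ring
    -- cast target
    have hcast : ((∑ i ∈ Finset.range n, (a i - 3) : ℤ) : ℝ) =
        ∑ i ∈ Finset.range n, ((a i : ℝ) - 2) - n := by
      push_cast
      rw [Finset.sum_sub_distrib, Finset.sum_sub_distrib]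
      simp [Finset.sum_const]
      ring
    calc ((n : ℝ) + (∑ i ∈ Finset.range n, (a i - 3) : ℤ)) / 4
        = ∑ i ∈ Finset.range n, ((a i : ℝ) - 2) / 4 := by
          rw [hcast, ← Finset.sum_div]; ring
      _ ≤ ∑ i ∈ Finset.range n, ((a i : ℝ) - 2) * d i ^ 2 := hmain
      _ ≤ ∑ i ∈ Finset.range n, ∑ j ∈ Finset.range n,
            d i * d j * ((stdInnerZ (v i) (v j) : ℤ) : ℝ) := by
          rw [h3, hsplit]
          nlinarith [sos, sos_nonneg]
      _ = ∑ t : Fin n, (((∑ i ∈ Finset.range n, c i * v i t : ℤ) : ℝ) -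
            ((∑ i ∈ Finset.range n, v i t : ℤ) : ℝ) / 2) ^ 2 := by
          rw [← h2]
          exact Finset.sum_congr rfl fun t _ => by rw [h1 t]
  · have hIr : (0 : ℝ) < ((∑ i ∈ Finset.range n, (a i - 3) : ℤ) : ℝ) := by
      exact_mod_cast hI
    linarith
end

section
/- Let n ≥ 3 and let S = {v₁, …, vₙ} ⊂ ℤⁿ be a negative cyclic subset (⟨vᵢ, vᵢ⟩ = aᵢ ≥ 2, ⟨vᵢ, vᵢ₊₁⟩ = −1 for 1 ≤ i ≤ n−1, ⟨vₙ, v₁⟩ = 1, ⟨vᵢ, vⱼ⟩ = 0 otherwise for i ≠ j) with I(S) = Σᵢ(aᵢ − 3) > 0, and suppose the Wu element W = Σᵢ vᵢ has all coordinates odd with respect to the standard basis of ℤⁿ. Then the sublattice Λ generated by S is not cubiquitous: there exists x₀ ∈ ℤⁿ such that Λ ∩ (x₀ + {0,1}ⁿ) = ∅. -/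
/-- Let S = {v₁,…,vₙ} ⊂ ℤⁿ (n ≥ 3) be a negative cyclic subset
(⟨vᵢ,vᵢ⟩ = aᵢ ≥ 2, ⟨vᵢ,vᵢ₊₁⟩ = −1 for 1 ≤ i ≤ n−1, ⟨vₙ,v₁⟩ = 1, other pairwise
inner products zero) with I(S) = Σᵢ(aᵢ−3) > 0, whose Wu element W = Σᵢ vᵢ has all
coordinates odd. Then the sublattice generated by S is not cubiquitous: some unit
cube x₀ + {0,1}ⁿ contains no point of the lattice. -/
theorem stmt_7 (n : ℕ) (hn : 3 ≤ n) (v : ℕ → Fin n → ℤ) (a : ℕ → ℤ)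
    (ha : ∀ i < n, 2 ≤ a i)
    (hdiag : ∀ i < n, stdInnerZ (v i) (v i) = a i)
    (hadj : ∀ i, i + 1 < n → stdInnerZ (v i) (v (i + 1)) = -1)
    (hwrap : stdInnerZ (v (n - 1)) (v 0) = 1)
    (hzero : ∀ i j, i < n → j < n → i ≠ j → j ≠ i + 1 → i ≠ j + 1 →
      ¬(i = 0 ∧ j = n - 1) → ¬(j = 0 ∧ i = n - 1) → stdInnerZ (v i) (v j) = 0)
    (hI : 0 < ∑ i ∈ Finset.range n, (a i - 3))
    (hodd : ∀ t : Fin n, Odd (∑ i ∈ Finset.range n, v i t)) :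
    ∃ x₀ : Fin n → ℤ, ∀ c : ℕ → ℤ,
      ¬ ∀ t : Fin n, (∑ i ∈ Finset.range n, c i * v i t) = x₀ t ∨
        (∑ i ∈ Finset.range n, c i * v i t) = x₀ t + 1 := by
  classical
  have hsymm : ∀ u w : Fin n → ℤ, stdInnerZ u w = stdInnerZ w u := by
    intro u w
    exact Finset.sum_congr rfl fun t _ => mul_comm _ _
  -- Gram matrix closed formula
  have hg : ∀ i < n, ∀ j < n, stdInnerZ (v i) (v j) =
      (if i = j then a i else 0) + (if j = i + 1 then -1 else 0)
      + (if i = j + 1 then -1 else 0) + (if i = 0 ∧ j = n - 1 then 1 else 0)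
      + (if j = 0 ∧ i = n - 1 then 1 else 0) := by
    intro i hi j hj
    by_cases h1 : i = j
    · subst h1
      rw [hdiag i hi]
      split_ifs <;> first | contradiction | omega
    · by_cases h2 : j = i + 1
      · subst h2
        rw [hadj i hj]
        split_ifs <;> first | contradiction | omega
      · by_cases h3 : i = j + 1
        · subst h3
          rw [hsymm, hadj j hi]
          split_ifs <;> first | contradiction | omega
        · by_cases h4 : i = 0 ∧ j = n - 1
          · obtain ⟨h4a, h4b⟩ := h4
            subst h4a; subst h4b
            rw [hsymm, hwrap]
            split_ifs <;> first | contradiction | omega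
          · by_cases h5 : j = 0 ∧ i = n - 1
            · obtain ⟨h5a, h5b⟩ := h5
              subst h5a; subst h5b
              rw [hwrap]
              split_ifs <;> first | contradiction | omega
            · rw [hzero i j hi hj h1 h2 h3 h4 h5]
              split_ifs <;> first | contradiction | omega
  obtain ⟨m, rfl⟩ : ∃ m, n = m + 1 := ⟨n - 1, by omega⟩
  have hm1 : m + 1 - 1 = m := by omega
  rw [hm1] at hg
  choose k hk using hodd
  refine ⟨k, ?_⟩
  intro c hc
  set B : ℕ → ℤ := fun i => 2 * c i - 1 with hB
  -- each coordinate of 2λ - W is ±1, so its square is 1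
  have hpm : ∀ t : Fin (m+1), (∑ i ∈ Finset.range (m+1), B i * v i t) ^ 2 = 1 := by
    intro t
    have h1 : ∑ i ∈ Finset.range (m+1), B i * v i t
        = 2 * (∑ i ∈ Finset.range (m+1), c i * v i t) - ∑ i ∈ Finset.range (m+1), v i t := by
      rw [Finset.mul_sum, ← Finset.sum_sub_distrib]
      exact Finset.sum_congr rfl fun i _ => by simp only [hB]; ring
    rcases hc t with h | h <;> rw [h1, h, hk t] <;> ring
  -- the squared norm of 2λ - W equals n
  have key : ∑ i ∈ Finset.range (m+1), ∑ j ∈ Finset.range (m+1),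
      B i * B j * stdInnerZ (v i) (v j) = ((m : ℤ) + 1) := by
    have expand : ∑ t : Fin (m+1), (∑ i ∈ Finset.range (m+1), B i * v i t) ^ 2
        = ∑ i ∈ Finset.range (m+1), ∑ j ∈ Finset.range (m+1),
            B i * B j * stdInnerZ (v i) (v j) := by
      unfold stdInnerZ
      simp_rw [sq, Finset.sum_mul_sum, Finset.mul_sum]
      rw [Finset.sum_comm]
      refine Finset.sum_congr rfl fun i _ => ?_
      rw [Finset.sum_comm]
      exact Finset.sum_congr rfl fun j _ => Finset.sum_congr rfl fun t _ => by ring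
    rw [← expand]
    rw [Finset.sum_congr rfl fun t _ => hpm t]
    simp
  -- collapse the double sum using the Gram formula
  have collapse : ∑ i ∈ Finset.range (m+1), ∑ j ∈ Finset.range (m+1),
      B i * B j * stdInnerZ (v i) (v j)
      = (∑ i ∈ Finset.range (m+1), a i * (B i)^2)
        - 2 * ∑ i ∈ Finset.range m, B i * B (i+1) + 2 * (B 0 * B m) := by
    have step : ∀ i ∈ Finset.range (m+1), ∑ j ∈ Finset.range (m+1),
        B i * B j * stdInnerZ (v i) (v j)
        = a i * (B i)^2
          + (if i + 1 < m + 1 then -(B i * B (i+1)) else 0)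
          + (if 1 ≤ i then -(B (i-1) * B i) else 0)
          + (if i = 0 then B 0 * B m else 0)
          + (if i = m then B 0 * B m else 0) := by
      intro i hi
      rw [Finset.mem_range] at hi
      rw [Finset.sum_congr rfl fun j hj => by
        rw [hg i hi j (Finset.mem_range.mp hj)]]
      simp only [mul_add, mul_ite, mul_zero, mul_neg, mul_one]
      rw [Finset.sum_add_distrib, Finset.sum_add_distrib, Finset.sum_add_distrib,
        Finset.sum_add_distrib]
      congr 1
      congr 1
      congr 1
      congr 1
      · -- diagonal
        rw [Finset.sum_ite_eq (Finset.range (m+1)) i (fun j => B i * B j * a i),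
          if_pos (Finset.mem_range.mpr hi)]
        ring
      · -- j = i + 1
        rw [Finset.sum_ite_eq' (Finset.range (m+1)) (i+1) (fun j => -(B i * B j))]
        by_cases h : i + 1 < m + 1
        · rw [if_pos (Finset.mem_range.mpr h), if_pos h]
        · rw [if_neg (fun hmem => h (Finset.mem_range.mp hmem)), if_neg h]
      · -- i = j + 1
        by_cases h : 1 ≤ i
        · have hrw : ∀ j ∈ Finset.range (m+1), (if i = j + 1 then -(B i * B j) else 0)
              = (if j = i - 1 then -(B i * B j) else 0) := by
            intro j _
            by_cases hh : i = j + 1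
            · rw [if_pos hh, if_pos (by omega)]
            · rw [if_neg hh, if_neg (by omega)]
          rw [Finset.sum_congr rfl hrw,
            Finset.sum_ite_eq' (Finset.range (m+1)) (i-1) (fun j => -(B i * B j)),
            if_pos (Finset.mem_range.mpr (by omega)), if_pos h]
          ring
        · have hrw : ∀ j ∈ Finset.range (m+1), (if i = j + 1 then -(B i * B j) else 0)
              = 0 := by
            intro j _
            rw [if_neg (by omega)]
          rw [Finset.sum_congr rfl hrw, Finset.sum_const_zero, if_neg h]
      · -- corner i = 0, j = m
        by_cases h : i = 0
        · have hrw : ∀ j ∈ Finset.range (m+1), (if i = 0 ∧ j = m then B i * B j else 0)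
              = (if j = m then B i * B j else 0) := by
            intro j _
            by_cases hj : j = m
            · rw [if_pos ⟨h, hj⟩, if_pos hj]
            · rw [if_neg (by tauto), if_neg hj]
          rw [Finset.sum_congr rfl hrw,
            Finset.sum_ite_eq' (Finset.range (m+1)) m (fun j => B i * B j),
            if_pos (Finset.mem_range.mpr (by omega)), if_pos h, h]
        · have hrw : ∀ j ∈ Finset.range (m+1), (if i = 0 ∧ j = m then B i * B j else 0)
              = 0 := by
            intro j _
            rw [if_neg (by tauto)]
          rw [Finset.sum_congr rfl hrw, Finset.sum_const_zero, if_neg h]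
      · -- corner j = 0, i = m
        by_cases h : i = m
        · have hrw : ∀ j ∈ Finset.range (m+1), (if j = 0 ∧ i = m then B i * B j else 0)
              = (if j = 0 then B i * B j else 0) := by
            intro j _
            by_cases hj : j = 0
            · rw [if_pos ⟨hj, h⟩, if_pos hj]
            · rw [if_neg (by tauto), if_neg hj]
          rw [Finset.sum_congr rfl hrw,
            Finset.sum_ite_eq' (Finset.range (m+1)) 0 (fun j => B i * B j),
            if_pos (Finset.mem_range.mpr (by omega)), if_pos h, h]
          ring
        · have hrw : ∀ j ∈ Finset.range (m+1), (if j = 0 ∧ i = m then B i * B j else 0)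
              = 0 := by
            intro j _
            rw [if_neg (by tauto)]
          rw [Finset.sum_congr rfl hrw, Finset.sum_const_zero, if_neg h]
    rw [Finset.sum_congr rfl step]
    rw [Finset.sum_add_distrib, Finset.sum_add_distrib, Finset.sum_add_distrib,
      Finset.sum_add_distrib]
    have e2 : ∑ i ∈ Finset.range (m+1), (if i + 1 < m + 1 then -(B i * B (i+1)) else 0)
        = -∑ i ∈ Finset.range m, B i * B (i+1) := by
      rw [Finset.sum_range_succ, if_neg (by omega), add_zero, ← Finset.sum_neg_distrib]
      exact Finset.sum_congr rfl fun i hi =>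
        if_pos (by have := Finset.mem_range.mp hi; omega)
    have e3 : ∑ i ∈ Finset.range (m+1), (if 1 ≤ i then -(B (i-1) * B i) else 0)
        = -∑ i ∈ Finset.range m, B i * B (i+1) := by
      rw [Finset.sum_range_succ']
      have f0 : (if (1:ℕ) ≤ 0 then -(B (0-1) * B 0) else 0) = 0 := by
        rw [if_neg (by omega)]
      rw [f0, add_zero, ← Finset.sum_neg_distrib]
      refine Finset.sum_congr rfl fun i hi => ?_
      rw [if_pos (by omega), Nat.add_sub_cancel]
    have e4 : ∑ i ∈ Finset.range (m+1), (if i = 0 then B 0 * B m else 0)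
        = B 0 * B m := by
      rw [Finset.sum_ite_eq' (Finset.range (m+1)) 0 (fun _ => B 0 * B m),
        if_pos (Finset.mem_range.mpr (by omega))]
    have e5 : ∑ i ∈ Finset.range (m+1), (if i = m then B 0 * B m else 0)
        = B 0 * B m := by
      rw [Finset.sum_ite_eq' (Finset.range (m+1)) m (fun _ => B 0 * B m),
        if_pos (Finset.mem_range.mpr (by omega))]
    rw [e2, e3, e4, e5]
    ring
  -- sum-of-squares identity
  have sos : (∑ i ∈ Finset.range (m+1), a i * (B i)^2)
        - 2 * ∑ i ∈ Finset.range m, B i * B (i+1) + 2 * (B 0 * B m)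
      = (∑ i ∈ Finset.range (m+1), (a i - 2) * (B i)^2)
        + (∑ i ∈ Finset.range m, (B i - B (i+1))^2) + (B 0 + B m)^2 := by
    have q1 : ∑ i ∈ Finset.range m, (B i - B (i+1))^2
        = (∑ i ∈ Finset.range m, (B i)^2) + (∑ i ∈ Finset.range m, (B (i+1))^2)
          - 2 * ∑ i ∈ Finset.range m, B i * B (i+1) := by
      rw [← Finset.sum_add_distrib, Finset.mul_sum, ← Finset.sum_sub_distrib]
      exact Finset.sum_congr rfl fun i _ => by ring
    have q2 : ∑ i ∈ Finset.range m, (B i)^2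
        = (∑ i ∈ Finset.range (m+1), (B i)^2) - (B m)^2 := by
      rw [Finset.sum_range_succ]; ring
    have q3 : ∑ i ∈ Finset.range m, (B (i+1))^2
        = (∑ i ∈ Finset.range (m+1), (B i)^2) - (B 0)^2 := by
      rw [Finset.sum_range_succ']; ring
    have q4 : ∑ i ∈ Finset.range (m+1), (a i - 2) * (B i)^2
        = (∑ i ∈ Finset.range (m+1), a i * (B i)^2)
          - 2 * ∑ i ∈ Finset.range (m+1), (B i)^2 := by
      rw [Finset.mul_sum, ← Finset.sum_sub_distrib]
      exact Finset.sum_congr rfl fun i _ => by ring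
    rw [q1, q2, q3, q4]
    ring
  -- lower bounds
  have hBsq : ∀ i, 1 ≤ (B i)^2 := by
    intro i
    have hne : B i ≠ 0 := by simp only [hB]; omega
    have h1 : 1 ≤ |B i| := Int.one_le_abs hne
    calc (1:ℤ) = 1 * 1 := by ring
      _ ≤ |B i| * |B i| := mul_le_mul h1 h1 (by norm_num) (by linarith)
      _ = (B i)^2 := by rw [← abs_mul, abs_mul_self, sq]
  have lb1 : (∑ i ∈ Finset.range (m+1), (a i - 2))
      ≤ ∑ i ∈ Finset.range (m+1), (a i - 2) * (B i)^2 := by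
    refine Finset.sum_le_sum fun i hi => ?_
    have hi' := Finset.mem_range.mp hi
    have ha' := ha i hi'
    nlinarith [hBsq i]
  have lb2 : (0:ℤ) ≤ ∑ i ∈ Finset.range m, (B i - B (i+1))^2 :=
    Finset.sum_nonneg fun i _ => sq_nonneg _
  have lb3 : (0:ℤ) ≤ (B 0 + B m)^2 := sq_nonneg _
  have esum : ∑ i ∈ Finset.range (m+1), (a i - 2)
      = (∑ i ∈ Finset.range (m+1), (a i - 3)) + ((m:ℤ) + 1) := by
    have hh : ∀ i ∈ Finset.range (m+1), a i - 2 = (a i - 3) + 1 := fun i _ => by ring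
    rw [Finset.sum_congr rfl hh, Finset.sum_add_distrib, Finset.sum_const,
      Finset.card_range]
    push_cast
    ring
  rw [collapse, sos] at key
  rw [esum] at lb1
  linarith
end

section
/- For every n ≥ 2, let Mₙ be the n×n integer matrix with Mᵢᵢ = −2 for all i, M_{i,i+1} = M_{i+1,i} = 1 for 1 ≤ i ≤ n−1, M_{1,n} = M_{n,1} = −1 (for n ≥ 3; for n = 2 take M₁₂ = M₂₁ = 1 + (−1) = 0, i.e., the off-diagonal entries are 0). Then |det Mₙ| = 4. -/
open Matrix


/-- The intersection matrix of the cyclic plumbing X^{−1}_{(2,…,2)} with n vertices: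
diagonal entries −2, cyclically adjacent entries 1, except that the entry joining
vertex n to vertex 1 is −1 (so that for n = 2 the contributions +1 and −1 joining
the two vertices cancel and the off-diagonal entries are 0). -/
def cycMat (n : ℕ) : Matrix (Fin n) (Fin n) ℤ := fun i j =>
  (if i = j then -2 else 0) +
    (if (i : ℕ) + 1 = (j : ℕ) ∨ (j : ℕ) + 1 = (i : ℕ) then 1 else 0) +
      (if ((i : ℕ) = 0 ∧ (j : ℕ) = n - 1) ∨ ((j : ℕ) = 0 ∧ (i : ℕ) = n - 1) then -1 else 0)

/-- The twisted cyclic shift: `S e_i = e_{i+1}` for `i < n-1`, `S e_{n-1} = -e_0`. -/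
def cycS (n : ℕ) : Matrix (Fin n) (Fin n) ℤ := fun i j =>
  if (i : ℕ) = (j : ℕ) + 1 then 1
  else if (i : ℕ) = 0 ∧ (j : ℕ) = n - 1 then -1 else 0

/-- Lower triangular all-ones matrix. -/
def cycL (n : ℕ) : Matrix (Fin n) (Fin n) ℤ := fun i j =>
  if (j : ℕ) ≤ (i : ℕ) then 1 else 0

/-- Upper triangular matrix resulting from row reduction of `1 - cycS n`. -/
def cycU (n : ℕ) : Matrix (Fin n) (Fin n) ℤ := fun i j =>
  if i = j then (if (i : ℕ) = n - 1 then 2 else 1)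
  else if (j : ℕ) = n - 1 then 1 else 0

lemma cycS_mul_transpose (n : ℕ) (hn : 2 ≤ n) : cycS n * (cycS n)ᵀ = 1 := by
  ext i j
  rw [Matrix.mul_apply]
  by_cases hi : (i : ℕ) = 0
  · rw [Finset.sum_eq_single (⟨n - 1, by omega⟩ : Fin n)]
    · simp only [cycS, Matrix.transpose_apply, Matrix.one_apply, Fin.ext_iff, Fin.val_mk, and_true, true_and]
      have hj := j.isLt
      split_ifs <;> first | contradiction | omega | norm_num
    · intro b _ hb
      have hb' : (b : ℕ) ≠ n - 1 := by
        simpa [Fin.ext_iff, Fin.val_mk, and_true, true_and] using hb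
      simp only [cycS, Matrix.transpose_apply]
      have : ¬ ((i : ℕ) = (b : ℕ) + 1) := by omega
      rw [if_neg this, if_neg (by omega)]
      ring
    · simp
  · rw [Finset.sum_eq_single (⟨(i : ℕ) - 1, by omega⟩ : Fin n)]
    · simp only [cycS, Matrix.transpose_apply, Matrix.one_apply, Fin.ext_iff, Fin.val_mk, and_true, true_and]
      have hj := j.isLt
      have hi' := i.isLt
      split_ifs <;> first | contradiction | omega | norm_num
    · intro b _ hb
      have hb' : (b : ℕ) ≠ (i : ℕ) - 1 := by
        simpa [Fin.ext_iff, Fin.val_mk, and_true, true_and] using hb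
      simp only [cycS, Matrix.transpose_apply]
      rw [if_neg (by omega), if_neg (by omega)]
      ring
    · simp

set_option maxHeartbeats 1000000 in
lemma cycL_mul (n : ℕ) (hn : 2 ≤ n) : cycL n * (1 - cycS n) = cycU n := by
  ext i j
  rw [Matrix.mul_apply]
  by_cases hj : (j : ℕ) = n - 1
  · rw [Finset.sum_eq_add_of_mem (⟨0, by omega⟩ : Fin n) (⟨n - 1, by omega⟩ : Fin n)
      (Finset.mem_univ _) (Finset.mem_univ _)
      (by simp only [ne_eq, Fin.ext_iff, Fin.val_mk]; omega)
      (by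
        intro b _ hb
        have hb0 : (b : ℕ) ≠ 0 := by simpa [Fin.ext_iff, Fin.val_mk] using hb.1
        have hb1 : (b : ℕ) ≠ n - 1 := by simpa [Fin.ext_iff, Fin.val_mk] using hb.2
        simp only [cycL, cycS, Matrix.sub_apply, Matrix.one_apply, Fin.ext_iff, Fin.val_mk, and_true, true_and]
        have hbn := b.isLt
        split_ifs <;> first | contradiction | omega | ring | norm_num)]
    simp only [cycL, cycS, cycU, Matrix.sub_apply, Matrix.one_apply, Fin.ext_iff, Fin.val_mk, and_true, true_and]
    have hi := i.isLt
    split_ifs <;> first | contradiction | omega | norm_num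
  · -- column j has nonzero entries at k = j and k = j+1
    have hj1 : (j : ℕ) + 1 < n := by have := j.isLt; omega
    have key : ∀ b : Fin n, b ≠ j → b ≠ ⟨(j : ℕ) + 1, hj1⟩ →
        cycL n i b * (1 - cycS n) b j = 0 := by
      intro b h1 h2
      have h1' : (b : ℕ) ≠ (j : ℕ) := by simpa [Fin.ext_iff, Fin.val_mk, and_true, true_and] using h1
      have h2' : (b : ℕ) ≠ (j : ℕ) + 1 := by simpa [Fin.ext_iff, Fin.val_mk, and_true, true_and] using h2
      simp only [cycL, cycS, Matrix.sub_apply, Matrix.one_apply, Fin.ext_iff, Fin.val_mk, and_true, true_and]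
      have hbn := b.isLt
      split_ifs <;> first | contradiction | omega | ring | norm_num
    rw [Finset.sum_eq_add_of_mem j ⟨(j : ℕ) + 1, hj1⟩ (Finset.mem_univ _)
      (Finset.mem_univ _) (by simp only [ne_eq, Fin.ext_iff, Fin.val_mk, and_true, true_and]; omega) (by intro b _ hb; exact key b hb.1 hb.2)]
    simp only [cycL, cycS, cycU, Matrix.sub_apply, Matrix.one_apply, Fin.ext_iff, Fin.val_mk, and_true, true_and]
    have hi := i.isLt
    split_ifs <;> first | contradiction | omega | norm_num

lemma det_one_sub_cycS (n : ℕ) (hn : 2 ≤ n) : (1 - cycS n).det = 2 := by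
  have h := congrArg Matrix.det (cycL_mul n hn)
  rw [Matrix.det_mul] at h
  have hL : (cycL n).det = 1 := by
    rw [Matrix.det_of_lowerTriangular _ (by
      intro i j hij
      rw [OrderDual.toDual_lt_toDual] at hij
      simp only [cycL]
      rw [if_neg (by exact Nat.not_le.mpr hij)])]
    simp [cycL]
  have hU : (cycU n).det = 2 := by
    rw [Matrix.det_of_upperTriangular (by
      intro i j hij
      have hij' : (j : ℕ) < (i : ℕ) := hij
      have hin := i.isLt
      simp only [cycU]
      rw [if_neg (by simp only [Fin.ext_iff]; omega), if_neg (by omega)])]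
    rw [Finset.prod_eq_single (⟨n - 1, by omega⟩ : Fin n)]
    · simp [cycU]
    · intro b _ hb
      have hb' : (b : ℕ) ≠ n - 1 := by simpa [Fin.ext_iff, Fin.val_mk, and_true, true_and] using hb
      simp [cycU, hb']
    · simp
  rw [hL, one_mul, hU] at h
  exact h

lemma cycMat_eq (n : ℕ) (hn : 2 ≤ n) :
    cycMat n = -((1 - cycS n) * (1 - cycS n)ᵀ) := by
  have expand : (1 - cycS n) * (1 - cycS n)ᵀ
      = 1 - cycS n - (cycS n)ᵀ + cycS n * (cycS n)ᵀ := by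
    rw [Matrix.transpose_sub, Matrix.transpose_one]
    noncomm_ring
  rw [expand, cycS_mul_transpose n hn]
  ext i j
  simp only [cycMat, cycS, Matrix.neg_apply, Matrix.add_apply, Matrix.sub_apply,
    Matrix.one_apply, Matrix.transpose_apply, Fin.ext_iff, Fin.val_mk, and_true, true_and]
  have hi := i.isLt
  have hj := j.isLt
  split_ifs <;> first | contradiction | omega | norm_num

/-- For every n ≥ 2, |det Mₙ| = 4. -/
theorem stmt_13 (n : ℕ) (hn : 2 ≤ n) : (cycMat n).det.natAbs = 4 := by
  rw [cycMat_eq n hn, Matrix.det_neg, Matrix.det_mul, Matrix.det_transpose,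
    det_one_sub_cycS n hn]
  simp [Int.natAbs_mul, Int.natAbs_pow]
end
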